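/- Suppose ⟨C_α : α ∈ A⟩ is a disjoint club sequence on ω₂: A is a subset of {α < ω₂ : cf(α) = ω₁}, each C_α is a club subset of [α]^ω, and C_α ∩ C_β = ∅ for distinct α, β ∈ A. Then the set A ∪ {γ < ω₂ : cf(γ) = ω} does not contain a club subset of ω₂. -/

import Mathlib

/-- The first uncountable ordinal. -/
noncomputable def ω1 : Ordinal.{0} := (Cardinal.aleph 1).ord
/-- The second uncountable ordinal. -/
noncomputable def ω2 : Ordinal.{0} := (Cardinal.aleph 2).ord

-- The order type of a set of ordinals (correct whenever the set is small, e.g. countable).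
open Classical in
noncomputable def otp (σ : Set Ordinal.{0}) : Ordinal.{0} :=
  if h : ∃ o : Ordinal.{0}, Ordinal.lift.{1, 0} o =
      Ordinal.type ((· < ·) : σ → σ → Prop) then h.choose else 0

/-- `σ ∈ [α]^ω`: σ is a countably infinite subset of (the ordinals below) α. -/
def MemCtble (α : Ordinal.{0}) (σ : Set Ordinal.{0}) : Prop :=
  σ.Countable ∧ σ.Infinite ∧ ∀ x ∈ σ, x < α

/-- `C` is a club subset of `[α]^ω`: all members lie in `[α]^ω`, `C` is closed under
unions of increasing ω-chains, and `C` is cofinal under inclusion. -/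
def IsClubIn (α : Ordinal.{0}) (C : Set (Set Ordinal.{0})) : Prop :=
  (∀ σ ∈ C, MemCtble α σ) ∧
  (∀ f : ℕ → Set Ordinal.{0}, (∀ n, f n ∈ C) → (∀ n, f n ⊆ f (n + 1)) →
    (⋃ n, f n) ∈ C) ∧
  (∀ σ, MemCtble α σ → ∃ τ ∈ C, σ ⊆ τ)

/-- `S` is stationary in `[α]^ω`: it meets every club of `[α]^ω`. -/
def StatIn (α : Ordinal.{0}) (S : Set (Set Ordinal.{0})) : Prop :=
  ∀ C, IsClubIn α C → (S ∩ C).Nonempty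

/-- `C` is a closed unbounded subset of the ordinal `κ`. -/
def IsClubBelow (κ : Ordinal.{0}) (C : Set Ordinal.{0}) : Prop :=
  (∀ x ∈ C, x < κ) ∧ (∀ β < κ, ∃ x ∈ C, β ≤ x) ∧
  (∀ S : Set Ordinal.{0}, S ⊆ C → S.Nonempty → sSup S < κ → sSup S ∈ C)

/-- `S` is a stationary subset of the ordinal `κ`: it meets every club of `κ`. -/
def StatBelow (κ : Ordinal.{0}) (S : Set Ordinal.{0}) : Prop :=
  ∀ C, IsClubBelow κ C → (S ∩ C).Nonempty

/-- The tilde operation: `α ∈ tilde X` iff `ω1 ≤ α < ω2` and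
`{σ ∈ [α]^ω : otp σ ∈ X}` contains a club of `[α]^ω`. -/
def tilde (X : Set Ordinal.{0}) : Set Ordinal.{0} :=
  {α | ω1 ≤ α ∧ α < ω2 ∧ ∃ C, IsClubIn α C ∧ C ⊆ {σ | otp σ ∈ X}}

/-- `σ ∩ ω₁` equals the ordinal `γ` (i.e. as sets, `σ ∩ ω₁ = {x : x < γ}`). -/
def MeetO1 (σ : Set Ordinal.{0}) (γ : Ordinal.{0}) : Prop :=
  σ ∩ Set.Iio ω1 = Set.Iio γ


open Ordinal Cardinal Set

lemma omega0_lt_ω1 : Ordinal.omega0 < ω1 := by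
  have h : (Cardinal.aleph.{0} 0).ord < (Cardinal.aleph.{0} 1).ord :=
    Cardinal.ord_lt_ord.2 (Cardinal.aleph_lt_aleph.2 zero_lt_one)
  simpa [ω1, Cardinal.aleph_zero, Cardinal.ord_aleph0] using h

lemma ω1_lt_ω2 : ω1 < ω2 :=
  Cardinal.ord_lt_ord.2 (Cardinal.aleph_lt_aleph.2 one_lt_two)

lemma omega0_lt_ω2 : Ordinal.omega0 < ω2 := omega0_lt_ω1.trans ω1_lt_ω2

lemma ω2_pos : (0 : Ordinal) < ω2 := (Ordinal.omega0_pos).trans omega0_lt_ω2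

lemma ω1_isLimit : Order.IsSuccLimit ω1 := Cardinal.isSuccLimit_ord (Cardinal.aleph0_le_aleph 1)

lemma ω2_isLimit : Order.IsSuccLimit ω2 := Cardinal.isSuccLimit_ord (Cardinal.aleph0_le_aleph 2)

lemma cof_ω1 : ω1.cof = Cardinal.aleph 1 := Cardinal.isRegular_aleph_one.cof_eq

lemma aleph_two_eq_succ : Cardinal.aleph 2 = Order.succ (Cardinal.aleph 1) := by
  have h : ((2 : Ordinal)) = Order.succ (1 : Ordinal) := by
    rw [← Ordinal.add_one_eq_succ]; norm_num
  rw [h, Cardinal.aleph_succ]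

lemma cof_ω2 : ω2.cof = Cardinal.aleph 2 := by
  have h : Cardinal.IsRegular (Cardinal.aleph 2) := by
    rw [aleph_two_eq_succ]
    exact Cardinal.isRegular_succ (Cardinal.aleph0_le_aleph 1)
  exact h.cof_eq

lemma aleph0_lt_cof_ω2 : Cardinal.aleph0 < ω2.cof := by
  rw [cof_ω2]
  exact Cardinal.aleph0_lt_aleph_one.trans (Cardinal.aleph_lt_aleph.2 one_lt_two)

lemma aleph0_lt_cof_ω1 : Cardinal.aleph0 < ω1.cof := by
  rw [cof_ω1]; exact Cardinal.aleph0_lt_aleph_one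

lemma countable_Iio_of_lt_ω1 {i : Ordinal.{0}} (hi : i < ω1) : (Set.Iio i).Countable := by
  rw [Cardinal.countable_iff_lt_aleph_one, Ordinal.mk_Iio_ordinal, Cardinal.lift_lt_aleph_one]
  exact Cardinal.lt_ord.1 hi

lemma infinite_Iio_omega0 : (Set.Iio (Ordinal.omega0 : Ordinal.{0})).Infinite := by
  rw [← Set.infinite_coe_iff, Cardinal.infinite_iff, Ordinal.mk_Iio_ordinal]
  simp [Ordinal.card_omega0]

/-- sup of a countable set of ordinals each `< κ` is `< κ` when `ℵ₀ < cof κ`. -/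
lemma csSup_lt_of_countable {κ : Ordinal.{0}} (hκ : Cardinal.aleph0 < κ.cof)
    {y : Set Ordinal.{0}} (hy : y.Countable) (hsub : ∀ a ∈ y, a < κ) : sSup y < κ := by
  have hκpos : (0 : Ordinal) < κ := by
    rw [pos_iff_ne_zero]
    rintro rfl
    simp [Ordinal.cof_zero] at hκ
  rcases y.eq_empty_or_nonempty with rfl | hne
  · simpa [csSup_empty] using hκpos
  · obtain ⟨f, hf⟩ := Set.Countable.exists_eq_range hy hne
    subst hf
    have h1 : sSup (Set.range f) ≤ iSup f := by
      apply csSup_le (Set.range_nonempty f)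
      rintro a ⟨n, rfl⟩
      exact Ordinal.le_iSup f n
    refine lt_of_le_of_lt h1 (Ordinal.iSup_lt_ord ?_ ?_)
    · simpa using hκ
    · intro n; exact hsub _ ⟨n, rfl⟩

noncomputable def dcsStep (E : Ordinal.{0} → Ordinal.{0} → Ordinal.{0})
    (nxt : Ordinal.{0} → Ordinal.{0}) (W : Set Ordinal.{0} → Ordinal.{0})
    (S : Set Ordinal.{0}) : Set Ordinal.{0} :=
  S ∪ {nxt (sSup S)} ∪ (fun p : Ordinal.{0} × Ordinal.{0} => E p.1 p.2) ''
    (S ×ˢ (S ∩ Set.Iio ω1)) ∪ {W S}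

noncomputable def dcsChain (E : Ordinal.{0} → Ordinal.{0} → Ordinal.{0})
    (nxt : Ordinal.{0} → Ordinal.{0}) (W : Set Ordinal.{0} → Ordinal.{0}) :
    Ordinal.{0} → Set Ordinal.{0}
  | i => Set.Iio Ordinal.omega0 ∪ (Set.Iio i ∩ Set.Iio ω1) ∪
      ⋃ j : Set.Iio i, dcsStep E nxt W (dcsChain E nxt W j.1)
  termination_by i => i
  decreasing_by exact j.2

lemma dcsChain_def (E nxt W) (i : Ordinal.{0}) :
    dcsChain E nxt W i = Set.Iio Ordinal.omega0 ∪ (Set.Iio i ∩ Set.Iio ω1) ∪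
      ⋃ j : Set.Iio i, dcsStep E nxt W (dcsChain E nxt W j.1) := by
  rw [dcsChain]

section ChainLemmas

variable (E : Ordinal.{0} → Ordinal.{0} → Ordinal.{0}) (nxt : Ordinal.{0} → Ordinal.{0})
  (W : Set Ordinal.{0} → Ordinal.{0})

lemma dcsStep_self (S : Set Ordinal.{0}) : S ⊆ dcsStep E nxt W S := by
  intro a ha; exact Or.inl (Or.inl (Or.inl ha))

lemma dcsStep_nxt (S : Set Ordinal.{0}) : nxt (sSup S) ∈ dcsStep E nxt W S :=
  Or.inl (Or.inl (Or.inr rfl))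

lemma dcsStep_W (S : Set Ordinal.{0}) : W S ∈ dcsStep E nxt W S := Or.inr rfl

lemma dcsStep_E (S : Set Ordinal.{0}) {δ ξ : Ordinal.{0}} (hδ : δ ∈ S) (hξ : ξ ∈ S)
    (hξ1 : ξ < ω1) : E δ ξ ∈ dcsStep E nxt W S :=
  Or.inl (Or.inr ⟨⟨δ, ξ⟩, ⟨hδ, hξ, hξ1⟩, rfl⟩)

lemma dcsChain_seed (i : Ordinal.{0}) : Set.Iio Ordinal.omega0 ⊆ dcsChain E nxt W i := by
  rw [dcsChain_def]; intro a ha; exact Or.inl (Or.inl ha)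

lemma dcsChain_mid {i η : Ordinal.{0}} (h1 : η < i) (h2 : η < ω1) :
    η ∈ dcsChain E nxt W i := by
  rw [dcsChain_def]; exact Or.inl (Or.inr ⟨h1, h2⟩)

lemma dcsChain_step {i j : Ordinal.{0}} (h : j < i) :
    dcsStep E nxt W (dcsChain E nxt W j) ⊆ dcsChain E nxt W i := by
  rw [dcsChain_def E nxt W i]
  intro a ha
  exact Or.inr (Set.mem_iUnion.2 ⟨⟨j, h⟩, ha⟩)

lemma dcsChain_mono {i j : Ordinal.{0}} (h : i ≤ j) :
    dcsChain E nxt W i ⊆ dcsChain E nxt W j := by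
  rw [dcsChain_def E nxt W i]
  rintro a (ha | ha)
  · rcases ha with ha | ha
    · exact dcsChain_seed E nxt W j ha
    · exact dcsChain_mid E nxt W (lt_of_lt_of_le ha.1 h) ha.2
  · rw [Set.mem_iUnion] at ha
    obtain ⟨⟨k, hk⟩, hka⟩ := ha
    exact dcsChain_step E nxt W (lt_of_lt_of_le hk h) hka

lemma dcsChain_succ_sub {j : Ordinal.{0}} :
    dcsChain E nxt W j ⊆ dcsChain E nxt W (j + 1) :=
  (dcsStep_self E nxt W _).trans (dcsChain_step E nxt W (lt_add_one j))

lemma dcsChain_countable {i : Ordinal.{0}} (hi : i < ω1) :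
    (dcsChain E nxt W i).Countable := by
  induction i using Ordinal.induction with
  | h i IH =>
    rw [dcsChain_def]
    refine Set.Countable.union (Set.Countable.union ?_ ?_) ?_
    · exact countable_Iio_of_lt_ω1 omega0_lt_ω1
    · exact (countable_Iio_of_lt_ω1 hi).mono Set.inter_subset_left
    · have hIio : (Set.Iio i).Countable := countable_Iio_of_lt_ω1 hi
      have : Countable (Set.Iio i) := hIio.to_subtype
      refine Set.countable_iUnion fun j => ?_
      have hc : (dcsChain E nxt W j.1).Countable := IH j.1 j.2 (j.2.trans hi)
      unfold dcsStep
      refine Set.Countable.union (Set.Countable.union (Set.Countable.union hc ?_) ?_) ?_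
      · exact Set.countable_singleton _
      · exact Set.Countable.image ((hc.prod (hc.mono Set.inter_subset_left))) _
      · exact Set.countable_singleton _

noncomputable def dcsX (E : Ordinal.{0} → Ordinal.{0} → Ordinal.{0})
    (nxt : Ordinal.{0} → Ordinal.{0}) (W : Set Ordinal.{0} → Ordinal.{0}) :
    Set Ordinal.{0} :=
  ⋃ j : Set.Iio ω1, dcsChain E nxt W j.1

variable (hE1 : ∀ δ ξ, E δ ξ < ω2) (hn1 : ∀ ξ, nxt ξ < ω2) (hW1 : ∀ s, W s < ω2)

include hE1 hn1 hW1

lemma dcsChain_sub_ω2 : ∀ i, dcsChain E nxt W i ⊆ Set.Iio ω2 := by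
  intro i
  induction i using Ordinal.induction with
  | h i IH =>
    rw [dcsChain_def]
    rintro a ((ha | ha) | ha)
    · exact ha.trans omega0_lt_ω2
    · exact ha.2.trans ω1_lt_ω2
    · rw [Set.mem_iUnion] at ha
      obtain ⟨⟨j, hj⟩, hja⟩ := ha
      rcases hja with ((h | h) | h) | h
      · exact IH j hj h
      · rw [Set.mem_singleton_iff] at h; subst h; exact hn1 _
      · obtain ⟨p, _, rfl⟩ := h; exact hE1 _ _
      · rw [Set.mem_singleton_iff] at h; subst h; exact hW1 _

omit hE1 hn1 hW1 in
lemma dcsChain_mem_X {i : Ordinal.{0}} (hi : i < ω1) :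
    dcsChain E nxt W i ⊆ dcsX E nxt W := fun a ha =>
  Set.mem_iUnion.2 ⟨⟨i, hi⟩, ha⟩

lemma dcsX_sub : dcsX E nxt W ⊆ Set.Iio ω2 := by
  intro a ha
  rw [dcsX, Set.mem_iUnion] at ha
  obtain ⟨⟨j, hj⟩, hja⟩ := ha
  exact dcsChain_sub_ω2 E nxt W hE1 hn1 hW1 j hja

lemma dcsX_bdd : BddAbove (dcsX E nxt W) :=
  ⟨ω2, fun a ha => (dcsX_sub E nxt W hE1 hn1 hW1 ha).le⟩

lemma dcsChain_bdd (i : Ordinal.{0}) : BddAbove (dcsChain E nxt W i) :=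
  ⟨ω2, fun a ha => (dcsChain_sub_ω2 E nxt W hE1 hn1 hW1 i ha).le⟩

lemma dcsChain_sSup_lt {i : Ordinal.{0}} (hi : i < ω1) :
    sSup (dcsChain E nxt W i) < ω2 :=
  csSup_lt_of_countable aleph0_lt_cof_ω2 (dcsChain_countable E nxt W hi)
    (fun a ha => dcsChain_sub_ω2 E nxt W hE1 hn1 hW1 i ha)

omit hE1 hn1 hW1 in
lemma dcsX_nonempty : (dcsX E nxt W).Nonempty :=
  ⟨0, dcsChain_mem_X E nxt W (Ordinal.omega0_pos.trans omega0_lt_ω1)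
      (dcsChain_seed E nxt W 0 Ordinal.omega0_pos)⟩

variable (D : Set Ordinal.{0}) (hn2 : ∀ ξ, ξ + 1 < ω2 → nxt ξ ∈ D ∧ ξ < nxt ξ)
  (hE2 : ∀ δ, δ < ω2 → ∀ η, η < δ → ∃ ξ, ξ < ω1 ∧ E δ ξ = η)

include hn2

lemma dcsX_cofinalD : ∀ η ∈ dcsX E nxt W, ∃ d ∈ dcsX E nxt W, d ∈ D ∧ η < d := by
  intro η hη
  rw [dcsX, Set.mem_iUnion] at hη
  obtain ⟨⟨i, hi⟩, hmem⟩ := hη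
  set b := sSup (dcsChain E nxt W i) with hb
  have hbω2 : b < ω2 := dcsChain_sSup_lt E nxt W hE1 hn1 hW1 hi
  have hb1 : b + 1 < ω2 := by
    rw [Ordinal.add_one_eq_succ]
    exact ω2_isLimit.succ_lt hbω2
  obtain ⟨hd1, hd2⟩ := hn2 b hb1
  refine ⟨nxt b, ?_, hd1, ?_⟩
  · have hi1 : i + 1 < ω1 := by
      rw [Ordinal.add_one_eq_succ]; exact ω1_isLimit.succ_lt hi
    exact dcsChain_mem_X E nxt W hi1
      (dcsChain_step E nxt W (lt_add_one i) (dcsStep_nxt E nxt W _))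
  · exact lt_of_le_of_lt (le_csSup (dcsChain_bdd E nxt W hE1 hn1 hW1 i) hmem) hd2

lemma dcs_lt_sSup : ∀ η ∈ dcsX E nxt W, η < sSup (dcsX E nxt W) := by
  intro η hη
  obtain ⟨d, hdX, _, hηd⟩ := dcsX_cofinalD E nxt W hE1 hn1 hW1 D hn2 η hη
  exact hηd.trans_le (le_csSup (dcsX_bdd E nxt W hE1 hn1 hW1) hdX)

omit hn2 in
lemma dcs_sSup_lt_ω2 : sSup (dcsX E nxt W) < ω2 := by
  set f : ω1.ToType → Ordinal.{0} :=
    fun t => sSup (dcsChain E nxt W ((Ordinal.ToType.mk (o := ω1)).symm t).1) with hf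
  have h1 : sSup (dcsX E nxt W) ≤ iSup f := by
    apply csSup_le (dcsX_nonempty E nxt W)
    intro η hη
    rw [dcsX, Set.mem_iUnion] at hη
    obtain ⟨⟨i, hi⟩, hmem⟩ := hη
    have : η ≤ f (Ordinal.ToType.mk (o := ω1) ⟨i, hi⟩) := by
      rw [hf]; simp only [OrderIso.symm_apply_apply]
      exact le_csSup (dcsChain_bdd E nxt W hE1 hn1 hW1 i) hmem
    exact this.trans (Ordinal.le_iSup f _)
  refine h1.trans_lt (Ordinal.iSup_lt_ord ?_ ?_)
  · rw [Cardinal.mk_toType, ω1, Cardinal.card_ord, cof_ω2]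
    exact Cardinal.aleph_lt_aleph.2 one_lt_two
  · intro t
    exact dcsChain_sSup_lt E nxt W hE1 hn1 hW1 ((Ordinal.ToType.mk (o := ω1)).symm t).2

include hE2

lemma dcsX_eq_Iio : dcsX E nxt W = Set.Iio (sSup (dcsX E nxt W)) := by
  apply Set.eq_of_subset_of_subset
  · intro η hη
    exact dcs_lt_sSup E nxt W hE1 hn1 hW1 D hn2 η hη
  · intro η hη
    rw [Set.mem_Iio, lt_csSup_iff (dcsX_bdd E nxt W hE1 hn1 hW1)
      (dcsX_nonempty E nxt W)] at hη
    obtain ⟨ρ, hρX, hηρ⟩ := hη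
    rw [dcsX, Set.mem_iUnion] at hρX
    obtain ⟨⟨i, hi⟩, hmem⟩ := hρX
    have hρω2 : ρ < ω2 := dcsChain_sub_ω2 E nxt W hE1 hn1 hW1 i hmem
    obtain ⟨ξ, hξ1, hξ2⟩ := hE2 ρ hρω2 η hηρ
    have hξ1' : ξ + 1 < ω1 := by
      rw [Ordinal.add_one_eq_succ]; exact ω1_isLimit.succ_lt hξ1
    set j := max i (ξ + 1) with hj
    have hjω1 : j < ω1 := max_lt hi hξ1'
    have hρj : ρ ∈ dcsChain E nxt W j := dcsChain_mono E nxt W (le_max_left _ _) hmem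
    have hξj : ξ ∈ dcsChain E nxt W j :=
      dcsChain_mono E nxt W (le_max_right _ _) (dcsChain_mid E nxt W (lt_add_one ξ) hξ1)
    have hj1 : j + 1 < ω1 := by
      rw [Ordinal.add_one_eq_succ]; exact ω1_isLimit.succ_lt hjω1
    have : E ρ ξ ∈ dcsChain E nxt W (j + 1) :=
      dcsChain_step E nxt W (lt_add_one j) (dcsStep_E E nxt W _ hρj hξj hξ1)
    rw [hξ2] at this
    exact dcsChain_mem_X E nxt W hj1 this

omit hE2 in
lemma dcs_sSup_mem_D
    (hD3 : ∀ S : Set Ordinal.{0}, S ⊆ D → S.Nonempty → sSup S < ω2 → sSup S ∈ D) :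
    sSup (dcsX E nxt W) ∈ D := by
  have hbdd := dcsX_bdd E nxt W hE1 hn1 hW1
  have hne := dcsX_nonempty E nxt W
  set X := dcsX E nxt W with hX
  set S := D ∩ X with hS
  have hSsub : S ⊆ D := Set.inter_subset_left
  have hSbdd : BddAbove S := hbdd.mono Set.inter_subset_right
  obtain ⟨a0, ha0⟩ := hne
  obtain ⟨d0, hd0X, hd0D, _⟩ := dcsX_cofinalD E nxt W hE1 hn1 hW1 D hn2 a0 ha0
  have hSne : S.Nonempty := ⟨d0, hd0D, hd0X⟩
  have hSup : sSup S = sSup X := by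
    apply le_antisymm
    · exact csSup_le_csSup hbdd hSne Set.inter_subset_right
    · apply csSup_le ⟨a0, ha0⟩
      intro η hη
      obtain ⟨d, hdX, hdD, hηd⟩ := dcsX_cofinalD E nxt W hE1 hn1 hW1 D hn2 η hη
      exact hηd.le.trans (le_csSup hSbdd ⟨hdD, hdX⟩)
  have := hD3 S hSsub hSne (by rw [hSup]; exact dcs_sSup_lt_ω2 E nxt W hE1 hn1 hW1)
  rwa [hSup] at this

omit hE1 hn1 hW1 hn2 hE2 in
lemma dcs_stage_absorb {y : Set Ordinal.{0}} (hy : y.Countable)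
    (hsub : y ⊆ dcsX E nxt W) : ∃ j, j < ω1 ∧ y ⊆ dcsChain E nxt W j := by
  rcases y.eq_empty_or_nonempty with rfl | hne
  · exact ⟨0, Ordinal.omega0_pos.trans omega0_lt_ω1, by simp⟩
  · obtain ⟨f, rfl⟩ := Set.Countable.exists_eq_range hy hne
    have hch : ∀ n : ℕ, ∃ j, j < ω1 ∧ f n ∈ dcsChain E nxt W j := by
      intro n
      have := hsub ⟨n, rfl⟩
      rw [dcsX, Set.mem_iUnion] at this
      obtain ⟨⟨j, hj⟩, hmem⟩ := this
      exact ⟨j, hj, hmem⟩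
    choose st hst1 hst2 using hch
    refine ⟨iSup st, Ordinal.iSup_lt_ord (by simpa using aleph0_lt_cof_ω1) hst1, ?_⟩
    rintro a ⟨n, rfl⟩
    exact dcsChain_mono E nxt W (Ordinal.le_iSup st n) (hst2 n)

lemma dcs_cof_ne_aleph0 : (sSup (dcsX E nxt W)).cof ≠ Cardinal.aleph0 := by
  intro hcof
  set X := dcsX E nxt W with hX
  set β := sSup X with hβ
  obtain ⟨ι, f, hlsub, hmk⟩ := Ordinal.exists_lsub_cof β
  have hι : #ι ≤ Cardinal.aleph0 := by rw [hmk, hcof]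
  have hfX : ∀ i, f i ∈ X := by
    intro i
    have h1 : f i < β := by rw [← hlsub]; exact Ordinal.lt_lsub f i
    rw [hX, dcsX_eq_Iio E nxt W hE1 hn1 hW1 D hn2 hE2]
    exact h1
  have : Countable ι := Cardinal.mk_le_aleph0_iff.1 hι
  have hrc : (Set.range f).Countable := Set.countable_range f
  obtain ⟨j, hj, hjsub⟩ := dcs_stage_absorb E nxt W hrc
    (by rintro a ⟨i, rfl⟩; exact hfX i)
  set b := sSup (dcsChain E nxt W j) with hb
  have hbω2 : b < ω2 := dcsChain_sSup_lt E nxt W hE1 hn1 hW1 hj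
  have hb1 : b + 1 < ω2 := by
    rw [Ordinal.add_one_eq_succ]; exact ω2_isLimit.succ_lt hbω2
  obtain ⟨hd1, hd2⟩ := hn2 b hb1
  have hj1 : j + 1 < ω1 := by
    rw [Ordinal.add_one_eq_succ]; exact ω1_isLimit.succ_lt hj
  have hdX : nxt b ∈ X :=
    dcsChain_mem_X E nxt W hj1
      (dcsChain_step E nxt W (lt_add_one j) (dcsStep_nxt E nxt W _))
  have hdβ : nxt b < β := dcs_lt_sSup E nxt W hE1 hn1 hW1 D hn2 _ hdX
  have hlsub_le : β ≤ b + 1 := by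
    rw [← hlsub]
    apply Ordinal.lsub_le
    intro i
    have : f i ≤ b := le_csSup (dcsChain_bdd E nxt W hE1 hn1 hW1 j) (hjsub ⟨i, rfl⟩)
    rw [Ordinal.add_one_eq_succ]
    exact this.trans_lt (Order.lt_succ b)
  have : b + 1 ≤ nxt b := by
    rw [Ordinal.add_one_eq_succ]; exact Order.succ_le_of_lt hd2
  exact absurd ((hlsub_le.trans this).trans_lt hdβ) (lt_irrefl β)

end ChainLemmas

theorem disjoint_club_sequence_no_club (A : Set Ordinal.{0})
    (C : Ordinal.{0} → Set (Set Ordinal.{0}))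
    (hA : ∀ α ∈ A, α < ω2 ∧ Ordinal.cof α = Cardinal.aleph 1)
    (hclub : ∀ α ∈ A, IsClubIn α (C α))
    (hdisj : ∀ α ∈ A, ∀ β ∈ A, α ≠ β → Disjoint (C α) (C β)) :
    ¬ ∃ D, IsClubBelow ω2 D ∧
      D ⊆ A ∪ {γ | γ < ω2 ∧ Ordinal.cof γ = Cardinal.aleph0} := by
  classical
  rintro ⟨D, ⟨hD1, hD2, hD3⟩, hsub⟩
  -- choose the surjections E
  have hEex : ∀ δ : Ordinal.{0}, ∃ f : Ordinal.{0} → Ordinal.{0},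
      (∀ ξ, f ξ < ω2) ∧ (δ < ω2 → ∀ η, η < δ → ∃ ξ, ξ < ω1 ∧ f ξ = η) := by
    intro δ
    by_cases hδ : δ < ω2
    · have hcard : (#(Set.Iio δ)) ≤ #(Set.Iio ω1) := by
        rw [Ordinal.mk_Iio_ordinal, Ordinal.mk_Iio_ordinal, Cardinal.lift_le]
        have h1 : δ.card < Cardinal.aleph 2 := Cardinal.lt_ord.1 hδ
        rw [aleph_two_eq_succ, Order.lt_succ_iff] at h1
        rw [ω1, Cardinal.card_ord]
        exact h1
      obtain ⟨emb⟩ := Cardinal.le_def _ _ |>.1 hcard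
      refine ⟨fun ξ => if h : ∃ y : Set.Iio δ, (emb y).1 = ξ then h.choose.1 else 0, ?_, ?_⟩
      · intro ξ
        by_cases h : ∃ y : Set.Iio δ, (emb y).1 = ξ
        · simp only [h, dif_pos]
          exact h.choose.2.trans hδ
        · simp only [h, dif_neg, not_false_iff]
          exact ω2_pos
      · intro _ η hη
        set y : Set.Iio δ := ⟨η, hη⟩ with hy
        refine ⟨(emb y).1, (emb y).2, ?_⟩
        have hex : ∃ z : Set.Iio δ, (emb z).1 = (emb y).1 := ⟨y, rfl⟩
        simp only [hex, dif_pos]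
        have : hex.choose = y := by
          apply emb.injective
          exact Subtype.coe_injective hex.choose_spec
        rw [this]
    · exact ⟨fun _ => 0, fun _ => ω2_pos, fun h => absurd h hδ⟩
  choose E hE1 hE2 using hEex
  -- choose nxt
  have hnex : ∀ ξ : Ordinal.{0}, ∃ d, d < ω2 ∧ (ξ + 1 < ω2 → d ∈ D ∧ ξ < d) := by
    intro ξ
    by_cases h : ξ + 1 < ω2
    · obtain ⟨d, hdD, hdge⟩ := hD2 (ξ + 1) h
      exact ⟨d, hD1 d hdD, fun _ => ⟨hdD, (lt_add_one ξ).trans_le hdge⟩⟩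
    · exact ⟨0, ω2_pos, fun hh => absurd hh h⟩
  choose nxt hn1 hn2 using hnex
  -- choose W
  have hWex : ∀ s : Set Ordinal.{0}, ∃ w, w < ω2 ∧
      ((∃ δ, δ ∈ A ∧ s ∈ C δ) → w ∈ A ∧ s ∈ C w) := by
    intro s
    by_cases h : ∃ δ, δ ∈ A ∧ s ∈ C δ
    · obtain ⟨δ, hδA, hδC⟩ := h
      exact ⟨δ, (hA δ hδA).1, fun _ => ⟨hδA, hδC⟩⟩
    · exact ⟨0, ω2_pos, fun hh => absurd hh h⟩
  choose W hW1 hW2 using hWex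
  -- the limit ordinal β
  set X := dcsX E nxt W with hX
  set β := sSup X with hβ
  have hXIio : X = Set.Iio β := dcsX_eq_Iio E nxt W hE1 hn1 hW1 D hn2 hE2
  have hβD : β ∈ D := dcs_sSup_mem_D E nxt W hE1 hn1 hW1 D hn2 hD3
  have hβcof : β.cof ≠ Cardinal.aleph0 :=
    dcs_cof_ne_aleph0 E nxt W hE1 hn1 hW1 D hn2 hE2
  have hβA : β ∈ A := by
    rcases hsub hβD with h | h
    · exact h
    · exact absurd h.2 hβcof
  obtain ⟨hCmem, hCchain, hCcof⟩ := hclub β hβA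
  -- extension function into C β
  have hgbex : ∀ y : Set Ordinal.{0}, ∃ τ, y ⊆ τ ∧ (MemCtble β y → τ ∈ C β) := by
    intro y
    by_cases h : MemCtble β y
    · obtain ⟨τ, hτC, hyτ⟩ := hCcof y h
      exact ⟨τ, hyτ, fun _ => hτC⟩
    · exact ⟨y, subset_rfl, fun hh => absurd hh h⟩
  choose gb hgb1 hgb2 using hgbex
  -- each chain stage is in [β]^ω
  have hMC : ∀ j, j < ω1 → MemCtble β (dcsChain E nxt W j) := by
    intro j hj
    refine ⟨dcsChain_countable E nxt W hj, ?_, ?_⟩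
    · exact infinite_Iio_omega0.mono (dcsChain_seed E nxt W j)
    · intro a ha
      have : a ∈ X := dcsChain_mem_X E nxt W hj ha
      rwa [hXIio] at this
  -- stage function
  have hstep : ∀ j, ∃ k, k < ω1 ∧
      (j < ω1 → (gb (dcsChain E nxt W j) ⊆ dcsChain E nxt W k ∧ j < k)) := by
    intro j
    by_cases hj : j < ω1
    · have hgbC : gb (dcsChain E nxt W j) ∈ C β := hgb2 _ (hMC j hj)
      have hmc := hCmem _ hgbC
      have hsubX : gb (dcsChain E nxt W j) ⊆ X := by
        intro a ha
        rw [hXIio]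
        exact hmc.2.2 a ha
      obtain ⟨k0, hk0, hk0sub⟩ := dcs_stage_absorb E nxt W hmc.1 hsubX
      refine ⟨max k0 j + 1, ?_, fun _ => ⟨?_, ?_⟩⟩
      · rw [Ordinal.add_one_eq_succ]
        exact ω1_isLimit.succ_lt (max_lt hk0 hj)
      · exact hk0sub.trans (dcsChain_mono E nxt W ((le_max_left _ _).trans (lt_add_one _).le))
      · exact (le_max_right k0 j).trans_lt (lt_add_one _)
    · exact ⟨0, Ordinal.omega0_pos.trans omega0_lt_ω1, fun hh => absurd hh hj⟩
  choose F hF1 hF2 using hstep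
  set r : ℕ → Ordinal.{0} := fun n => F^[n] 0 with hr
  have hr_succ : ∀ n, r (n + 1) = F (r n) := by
    intro n; rw [hr]; simp [Function.iterate_succ_apply']
  have hr_lt : ∀ n, r n < ω1 := by
    intro n
    induction n with
    | zero => exact Ordinal.omega0_pos.trans omega0_lt_ω1
    | succ n _ => rw [hr_succ]; exact hF1 _
  have hr_mono : ∀ n, r n < r (n + 1) := by
    intro n; rw [hr_succ]; exact (hF2 (r n) (hr_lt n)).2
  set istar := iSup r with histar_def
  have histar : istar < ω1 := by
    refine Ordinal.iSup_lt_ord ?_ hr_lt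
    rw [Cardinal.mk_nat]
    exact aleph0_lt_cof_ω1
  have hrle : ∀ n, r n ≤ istar := Ordinal.le_iSup r
  -- the istar-th stage is the union of the r n stages
  have hxistar : dcsChain E nxt W istar = ⋃ n, dcsChain E nxt W (r n) := by
    apply Set.eq_of_subset_of_subset
    · rw [dcsChain_def E nxt W istar]
      rintro a ((ha | ha) | ha)
      · exact Set.mem_iUnion.2 ⟨0, dcsChain_seed E nxt W _ ha⟩
      · obtain ⟨n, hn⟩ := Ordinal.lt_iSup_iff.1 ha.1
        exact Set.mem_iUnion.2 ⟨n, dcsChain_mid E nxt W hn ha.2⟩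
      · rw [Set.mem_iUnion] at ha
        obtain ⟨⟨j, hj⟩, hja⟩ := ha
        obtain ⟨n, hn⟩ := Ordinal.lt_iSup_iff.1 hj
        exact Set.mem_iUnion.2 ⟨n, dcsChain_step E nxt W hn hja⟩
    · exact Set.iUnion_subset fun n => dcsChain_mono E nxt W (hrle n)
  set σ : ℕ → Set Ordinal.{0} := fun n => gb (dcsChain E nxt W (r n)) with hσ
  have hσC : ∀ n, σ n ∈ C β := fun n => hgb2 _ (hMC (r n) (hr_lt n))
  have hσnext : ∀ n, σ n ⊆ dcsChain E nxt W (r (n + 1)) := by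
    intro n
    rw [hr_succ]
    exact (hF2 (r n) (hr_lt n)).1
  have hσmono : ∀ n, σ n ⊆ σ (n + 1) :=
    fun n => (hσnext n).trans (hgb1 _)
  have hσU : (⋃ n, σ n) = dcsChain E nxt W istar := by
    apply Set.eq_of_subset_of_subset
    · refine Set.iUnion_subset fun n => ?_
      exact (hσnext n).trans (dcsChain_mono E nxt W (hrle (n + 1)))
    · rw [hxistar]
      exact Set.iUnion_subset fun n => (hgb1 _).trans (Set.subset_iUnion σ n)
  have hfinal : dcsChain E nxt W istar ∈ C β := by
    rw [← hσU]
    exact hCchain σ hσC hσmono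
  -- the contradiction
  obtain ⟨hWA, hWC⟩ := hW2 (dcsChain E nxt W istar) ⟨β, hβA, hfinal⟩
  by_cases hδ : W (dcsChain E nxt W istar) = β
  · have histar1 : istar + 1 < ω1 := by
      rw [Ordinal.add_one_eq_succ]
      exact ω1_isLimit.succ_lt histar
    have hmem : W (dcsChain E nxt W istar) ∈ X :=
      dcsChain_mem_X E nxt W histar1
        (dcsChain_step E nxt W (lt_add_one istar) (dcsStep_W E nxt W _))
    rw [hδ, hXIio] at hmem
    exact absurd hmem (lt_irrefl β)
  · exact Set.disjoint_left.1 (hdisj _ hWA β hβA hδ) hWC hfinal
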